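/- Let n ≥ 3 be an integer. Then s(r) = (2/√(n−2)) √(r−1) + o(√(r−1)) as r → 1⁺ (i.e. (s(r) − (2/√(n−2))√(r−1))/√(r−1) → 0 as r → 1⁺), and s(r)/r → 1/n as r → ∞. -/

import Mathlib

open Filter MeasureTheory Set intervalIntegral


noncomputable def schIG (k : ℕ) (ξ : ℝ) : ℝ :=
  Real.sqrt (ξ ^ (k+1) / (ξ ^ (k+1) - 1)) * ξ ^ (k+2)

lemma rpow_neg_half (x : ℝ) (hx : 0 ≤ x) : x ^ (-(1/2) : ℝ) = (Real.sqrt x)⁻¹ := by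
  rw [Real.rpow_neg hx, Real.sqrt_eq_rpow]

lemma geom_lower {x : ℝ} (hx : 1 ≤ x) (m : ℕ) : (m:ℝ) * (x - 1) ≤ x ^ m - 1 := by
  have h := one_add_mul_le_pow (a := x - 1) (by linarith) m
  have e : (1 : ℝ) + (x - 1) = x := by ring
  rw [e] at h; linarith

lemma geom_upper {x : ℝ} (hx : 1 ≤ x) (m : ℕ) : x ^ m - 1 ≤ (m:ℝ) * x ^ m * (x - 1) := by
  have h := geom_sum_mul x m
  rw [← h]
  have hsum : (∑ i ∈ Finset.range m, x ^ i) ≤ (m:ℝ) * x ^ m := by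
    calc (∑ i ∈ Finset.range m, x ^ i) ≤ ∑ _i ∈ Finset.range m, x ^ m := by
          apply Finset.sum_le_sum
          intro i hi
          exact pow_le_pow_right₀ hx (Finset.mem_range.1 hi).le
      _ = (m:ℝ) * x ^ m := by simp [mul_comm]
  exact mul_le_mul_of_nonneg_right hsum (by linarith)

lemma schIG_nonneg (k : ℕ) {ξ : ℝ} (h : 0 ≤ ξ) : 0 ≤ schIG k ξ := by
  unfold schIG; positivity

lemma schIG_le {k : ℕ} {r ξ : ℝ} (h1 : 1 < ξ) (h2 : ξ ≤ r) :
    schIG k ξ ≤ Real.sqrt (r ^ (k+1) / ((k:ℝ)+1)) * r ^ (k+2) * (ξ - 1) ^ (-(1/2) : ℝ) := by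
  have hξ0 : (0:ℝ) < ξ := by linarith
  have hr0 : (0:ℝ) < r := by linarith
  have hd : (0:ℝ) < ((k:ℝ)+1) * (ξ - 1) := mul_pos (by positivity) (by linarith)
  have hnum : ξ ^ (k+1) ≤ r ^ (k+1) := pow_le_pow_left₀ (by linarith) h2 _
  have hden : ((k:ℝ)+1) * (ξ - 1) ≤ ξ ^ (k+1) - 1 := by
    have h := geom_lower h1.le (k+1); push_cast at h; linarith
  have hratio : ξ ^ (k+1) / (ξ ^ (k+1) - 1) ≤ r ^ (k+1) / (((k:ℝ)+1) * (ξ - 1)) :=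
    div_le_div₀ (pow_nonneg hr0.le _) hnum hd hden
  have hsq : Real.sqrt (ξ ^ (k+1) / (ξ ^ (k+1) - 1)) ≤
      Real.sqrt (r ^ (k+1) / ((k:ℝ)+1)) * (ξ - 1) ^ (-(1/2) : ℝ) := by
    calc Real.sqrt (ξ ^ (k+1) / (ξ ^ (k+1) - 1)) ≤
        Real.sqrt (r ^ (k+1) / (((k:ℝ)+1) * (ξ - 1))) := Real.sqrt_le_sqrt hratio
      _ = Real.sqrt (r ^ (k+1) / ((k:ℝ)+1) * (ξ - 1)⁻¹) := by
          rw [div_mul_eq_div_div, div_eq_mul_inv]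
      _ = Real.sqrt (r ^ (k+1) / ((k:ℝ)+1)) * Real.sqrt (ξ - 1)⁻¹ := by
          rw [Real.sqrt_mul (div_nonneg (pow_nonneg hr0.le _) (by positivity))]
      _ = Real.sqrt (r ^ (k+1) / ((k:ℝ)+1)) * (ξ - 1) ^ (-(1/2) : ℝ) := by
          rw [Real.sqrt_inv, rpow_neg_half _ (by linarith)]
  have hpow : ξ ^ (k+2) ≤ r ^ (k+2) := pow_le_pow_left₀ (by linarith) h2 _
  calc schIG k ξ = Real.sqrt (ξ ^ (k+1) / (ξ ^ (k+1) - 1)) * ξ ^ (k+2) := rfl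
    _ ≤ (Real.sqrt (r ^ (k+1) / ((k:ℝ)+1)) * (ξ - 1) ^ (-(1/2) : ℝ)) * r ^ (k+2) :=
        mul_le_mul hsq hpow (pow_nonneg hξ0.le _)
          (mul_nonneg (Real.sqrt_nonneg _) (Real.rpow_nonneg (by linarith) _))
    _ = Real.sqrt (r ^ (k+1) / ((k:ℝ)+1)) * r ^ (k+2) * (ξ - 1) ^ (-(1/2) : ℝ) := by ring

lemma le_schIG {k : ℕ} {r ξ : ℝ} (h1 : 1 < ξ) (h2 : ξ ≤ r) :
    (Real.sqrt (((k:ℝ)+1) * r ^ (k+1)))⁻¹ * (ξ - 1) ^ (-(1/2) : ℝ) ≤ schIG k ξ := by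
  have hξ0 : (0:ℝ) < ξ := by linarith
  have hr0 : (0:ℝ) < r := by linarith
  have hglow := geom_lower h1.le (k+1)
  push_cast at hglow
  have hd : (0:ℝ) < ξ ^ (k+1) - 1 := by nlinarith
  have hub : ξ ^ (k+1) - 1 ≤ ((k:ℝ)+1) * r ^ (k+1) * (ξ - 1) := by
    have h := geom_upper h1.le (k+1)
    have hnum : ξ ^ (k+1) ≤ r ^ (k+1) := pow_le_pow_left₀ (by linarith) h2 _
    push_cast at h
    nlinarith
  have hratio : 1 / (((k:ℝ)+1) * r ^ (k+1) * (ξ - 1)) ≤ ξ ^ (k+1) / (ξ ^ (k+1) - 1) :=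
    div_le_div₀ (pow_nonneg hξ0.le _) (one_le_pow₀ h1.le) hd hub
  have e0 : Real.sqrt (1 / (((k:ℝ)+1) * r ^ (k+1) * (ξ - 1))) =
      (Real.sqrt (((k:ℝ)+1) * r ^ (k+1)))⁻¹ * (Real.sqrt (ξ - 1))⁻¹ := by
    rw [one_div, Real.sqrt_inv, Real.sqrt_mul (by positivity : (0:ℝ) ≤ ((k:ℝ)+1) * r ^ (k+1)),
      mul_inv]
  have e : (Real.sqrt (((k:ℝ)+1) * r ^ (k+1)))⁻¹ * (ξ - 1) ^ (-(1/2) : ℝ) =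
      Real.sqrt (1 / (((k:ℝ)+1) * r ^ (k+1) * (ξ - 1))) := by
    rw [rpow_neg_half _ (by linarith), e0]
  have hsple : (Real.sqrt (((k:ℝ)+1) * r ^ (k+1)))⁻¹ * (ξ - 1) ^ (-(1/2) : ℝ) ≤
      Real.sqrt (ξ ^ (k+1) / (ξ ^ (k+1) - 1)) := by
    rw [e]; exact Real.sqrt_le_sqrt hratio
  calc (Real.sqrt (((k:ℝ)+1) * r ^ (k+1)))⁻¹ * (ξ - 1) ^ (-(1/2) : ℝ)
      ≤ Real.sqrt (ξ ^ (k+1) / (ξ ^ (k+1) - 1)) * 1 := by rw [mul_one]; exact hsple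
    _ ≤ schIG k ξ :=
        mul_le_mul_of_nonneg_left (one_le_pow₀ h1.le) (Real.sqrt_nonneg _)

lemma intInt_shift (r : ℝ) :
    IntervalIntegrable (fun ξ : ℝ => (ξ - 1) ^ (-(1/2):ℝ)) volume 1 r := by
  have h := intervalIntegral.intervalIntegrable_rpow'
    (a := 0) (b := r - 1) (r := -(1/2)) (by norm_num)
  have h2 := h.comp_sub_right 1
  simpa using h2

lemma integral_shift {r : ℝ} (hr : 1 ≤ r) :
    ∫ ξ in (1:ℝ)..r, (ξ - 1) ^ (-(1/2):ℝ) = 2 * Real.sqrt (r - 1) := by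
  have h := intervalIntegral.integral_comp_sub_right (a := 1) (b := r)
    (fun x : ℝ => x ^ (-(1/2):ℝ)) 1
  rw [h]
  norm_num
  rw [integral_rpow (Or.inl (by norm_num))]
  rw [Real.zero_rpow (by norm_num)]
  rw [show (-(1/2) + 1 : ℝ) = 1/2 by norm_num]
  rw [← Real.sqrt_eq_rpow]
  ring

lemma schIG_meas (k : ℕ) (μ : Measure ℝ) : AEStronglyMeasurable (schIG k) μ := by
  have hm : Measurable (schIG k) := by
    unfold schIG
    exact (Real.continuous_sqrt.measurable.comp
      ((measurable_id.pow_const _).div ((measurable_id.pow_const _).sub measurable_const))).mul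
      (measurable_id.pow_const _)
  exact hm.aestronglyMeasurable

lemma myMono {f g : ℝ → ℝ} {a b : ℝ} (hab : a ≤ b)
    (hf : IntervalIntegrable f volume a b) (hg : IntervalIntegrable g volume a b)
    (h : ∀ x ∈ Ioc a b, f x ≤ g x) :
    ∫ x in a..b, f x ≤ ∫ x in a..b, g x := by
  rw [integral_of_le hab, integral_of_le hab]
  have e : Set.uIoc a b = Ioc a b := uIoc_of_le hab
  exact setIntegral_mono_on (e ▸ intervalIntegrable_iff.1 hf)
    (e ▸ intervalIntegrable_iff.1 hg) measurableSet_Ioc h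

lemma schIG_intble {k : ℕ} {r : ℝ} (hr : 1 ≤ r) :
    IntervalIntegrable (schIG k) volume 1 r := by
  have hg : IntervalIntegrable
      (fun ξ : ℝ => Real.sqrt (r ^ (k+1) / ((k:ℝ)+1)) * r ^ (k+2) * (ξ - 1) ^ (-(1/2):ℝ))
      volume 1 r := (intInt_shift r).const_mul _
  apply hg.mono_fun (schIG_meas k _)
  rw [uIoc_of_le hr]
  refine (ae_restrict_iff' measurableSet_Ioc).2 (ae_of_all _ ?_)
  intro x hx
  have hx1 : 1 < x := hx.1
  have hx0 : (0:ℝ) < x := by linarith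
  have hr0 : (0:ℝ) < r := by linarith
  have hb := schIG_le (k := k) hx.1 hx.2
  have h1 : ‖schIG k x‖ = schIG k x := by
    rw [Real.norm_eq_abs, abs_of_nonneg (schIG_nonneg k hx0.le)]
  have h2 : (0:ℝ) ≤ Real.sqrt (r ^ (k+1) / ((k:ℝ)+1)) * r ^ (k+2) * (x - 1) ^ (-(1/2):ℝ) :=
    mul_nonneg (mul_nonneg (Real.sqrt_nonneg _) (pow_nonneg hr0.le _))
      (Real.rpow_nonneg (by linarith) _)
  simp only [h1, Real.norm_eq_abs, abs_of_nonneg h2]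
  exact hb

lemma integral_lb_one {k : ℕ} {r : ℝ} (hr : 1 < r) :
    (Real.sqrt (((k:ℝ)+1) * r ^ (k+1)))⁻¹ * (2 * Real.sqrt (r - 1)) ≤
      ∫ ξ in (1:ℝ)..r, schIG k ξ := by
  have hl : IntervalIntegrable
      (fun ξ : ℝ => (Real.sqrt (((k:ℝ)+1) * r ^ (k+1)))⁻¹ * (ξ - 1) ^ (-(1/2):ℝ))
      volume 1 r := (intInt_shift r).const_mul _
  have := myMono hr.le hl (schIG_intble hr.le) (fun x hx => le_schIG hx.1 hx.2)
  calc (Real.sqrt (((k:ℝ)+1) * r ^ (k+1)))⁻¹ * (2 * Real.sqrt (r - 1))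
      = ∫ ξ in (1:ℝ)..r, (Real.sqrt (((k:ℝ)+1) * r ^ (k+1)))⁻¹ * (ξ - 1) ^ (-(1/2):ℝ) := by
        rw [intervalIntegral.integral_const_mul, integral_shift hr.le]
    _ ≤ ∫ ξ in (1:ℝ)..r, schIG k ξ := this

lemma integral_ub_one {k : ℕ} {r : ℝ} (hr : 1 < r) :
    (∫ ξ in (1:ℝ)..r, schIG k ξ) ≤
      Real.sqrt (r ^ (k+1) / ((k:ℝ)+1)) * r ^ (k+2) * (2 * Real.sqrt (r - 1)) := by
  have hu : IntervalIntegrable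
      (fun ξ : ℝ => Real.sqrt (r ^ (k+1) / ((k:ℝ)+1)) * r ^ (k+2) * (ξ - 1) ^ (-(1/2):ℝ))
      volume 1 r := (intInt_shift r).const_mul _
  have := myMono hr.le (schIG_intble hr.le) hu (fun x hx => schIG_le hx.1 hx.2)
  calc (∫ ξ in (1:ℝ)..r, schIG k ξ)
      ≤ ∫ ξ in (1:ℝ)..r,
          Real.sqrt (r ^ (k+1) / ((k:ℝ)+1)) * r ^ (k+2) * (ξ - 1) ^ (-(1/2):ℝ) := this
    _ = Real.sqrt (r ^ (k+1) / ((k:ℝ)+1)) * r ^ (k+2) * (2 * Real.sqrt (r - 1)) := by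
        rw [mul_assoc, intervalIntegral.integral_const_mul,
          integral_shift hr.le]
        ring

lemma le_schIG_two {k : ℕ} {ξ : ℝ} (h1 : 1 < ξ) : ξ ^ (k+2) ≤ schIG k ξ := by
  have hglow := geom_lower h1.le (k+1)
  push_cast at hglow
  have hd : (0:ℝ) < ξ ^ (k+1) - 1 := by nlinarith
  have hone : (1:ℝ) ≤ ξ ^ (k+1) / (ξ ^ (k+1) - 1) := by
    rw [le_div_iff₀ hd]; linarith
  have : (1:ℝ) ≤ Real.sqrt (ξ ^ (k+1) / (ξ ^ (k+1) - 1)) := by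
    nth_rewrite 1 [show (1:ℝ) = Real.sqrt 1 from Real.sqrt_one.symm]
    exact Real.sqrt_le_sqrt hone
  calc ξ ^ (k+2) = 1 * ξ ^ (k+2) := (one_mul _).symm
    _ ≤ Real.sqrt (ξ ^ (k+1) / (ξ ^ (k+1) - 1)) * ξ ^ (k+2) :=
        mul_le_mul_of_nonneg_right this (pow_nonneg (by linarith) _)
    _ = schIG k ξ := rfl

lemma schIG_le_two {k : ℕ} {ξ : ℝ} (h2 : 2 ≤ ξ) : schIG k ξ ≤ ξ ^ (k+2) + ξ := by
  have h1 : (1:ℝ) < ξ := by linarith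
  have hξ0 : (0:ℝ) < ξ := by linarith
  set y := ξ ^ (k+1) with hy
  have hy2 : (2:ℝ) ≤ y := le_trans h2 (le_self_pow₀ (by linarith) (by omega))
  have hy0 : (0:ℝ) < y := by linarith
  have hsq : Real.sqrt (y / (y - 1)) ≤ 1 + y⁻¹ := by
    rw [show (1:ℝ) + y⁻¹ = Real.sqrt ((1 + y⁻¹)^2) from
      (Real.sqrt_sq (by positivity)).symm]
    apply Real.sqrt_le_sqrt
    rw [div_le_iff₀ (by linarith)]
    have e : (1 + y⁻¹)^2 * (y - 1) = (y + 1)^2 * (y - 1) / y^2 := by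
      field_simp
      try ring
    rw [e, le_div_iff₀ (by positivity)]
    nlinarith
  have hpy : ξ ^ (k+2) * y⁻¹ = ξ := by
    rw [hy, pow_succ]
    field_simp
  calc schIG k ξ = Real.sqrt (y / (y - 1)) * ξ ^ (k+2) := rfl
    _ ≤ (1 + y⁻¹) * ξ ^ (k+2) :=
        mul_le_mul_of_nonneg_right hsq (pow_nonneg hξ0.le _)
    _ = ξ ^ (k+2) + ξ ^ (k+2) * y⁻¹ := by ring
    _ = ξ ^ (k+2) + ξ := by rw [hpy]

lemma integral_lb_two {k : ℕ} {r : ℝ} (hr : 1 ≤ r) :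
    (r ^ (k+3) - 1) / ((k:ℝ)+3) ≤ ∫ ξ in (1:ℝ)..r, schIG k ξ := by
  have hp : IntervalIntegrable (fun ξ : ℝ => ξ ^ (k+2)) volume 1 r :=
    (continuous_pow _).intervalIntegrable _ _
  have := myMono hr hp (schIG_intble hr) (fun x hx => le_schIG_two hx.1)
  calc (r ^ (k+3) - 1) / ((k:ℝ)+3) = ∫ ξ in (1:ℝ)..r, ξ ^ (k+2) := by
        rw [integral_pow, show k+2+1 = k+3 from by omega]
        push_cast
        ring_nf
    _ ≤ ∫ ξ in (1:ℝ)..r, schIG k ξ := this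

lemma integral_ub_two {k : ℕ} {r : ℝ} (hr : 2 ≤ r) :
    (∫ ξ in (1:ℝ)..r, schIG k ξ) ≤
      (∫ ξ in (1:ℝ)..(2:ℝ), schIG k ξ) + r ^ (k+3) / ((k:ℝ)+3) + r ^ 2 / 2 := by
  have hr1 : (1:ℝ) ≤ r := by linarith
  have hi1r := schIG_intble (k := k) hr1
  have hi12 : IntervalIntegrable (schIG k) volume 1 2 :=
    hi1r.mono_set (by
      rw [uIcc_of_le (by norm_num : (1:ℝ) ≤ 2), uIcc_of_le hr1]
      exact Icc_subset_Icc le_rfl hr)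
  have hi2r : IntervalIntegrable (schIG k) volume 2 r :=
    hi1r.mono_set (by
      rw [uIcc_of_le hr, uIcc_of_le hr1]
      exact Icc_subset_Icc (by norm_num) le_rfl)
  have hsplit := intervalIntegral.integral_add_adjacent_intervals (f := schIG k)
    (μ := volume) (a := 1) (b := 2) (c := r) hi12 hi2r
  have hpol : IntervalIntegrable (fun ξ : ℝ => ξ ^ (k+2) + ξ) volume 2 r :=
    ((continuous_pow _).add continuous_id).intervalIntegrable _ _
  have hmono := myMono hr hi2r hpol (fun x hx => schIG_le_two (le_of_lt hx.1))
  have hval : (∫ ξ in (2:ℝ)..r, (ξ ^ (k+2) + ξ)) =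
      (r ^ (k+3) - 2 ^ (k+3)) / ((k:ℝ)+3) + (r ^ 2 - 2 ^ 2) / 2 := by
    rw [intervalIntegral.integral_add
      ((continuous_pow _).intervalIntegrable _ _)
      ((continuous_id'.intervalIntegrable _ _ : IntervalIntegrable (fun x : ℝ => x) volume 2 r))]
    rw [integral_pow, integral_id, show k+2+1 = k+3 from by omega]
    push_cast
    ring_nf
  have h2pow : (0:ℝ) ≤ 2 ^ (k+3) := by positivity
  have hk3 : (0:ℝ) < (k:ℝ)+3 := by positivity
  rw [hval] at hmono
  have e1 : (r ^ (k+3) - 2 ^ (k+3)) / ((k:ℝ)+3) ≤ r ^ (k+3) / ((k:ℝ)+3) :=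
    (div_le_div_iff_of_pos_right hk3).2 (by linarith)
  have e2 : (r ^ 2 - 2 ^ 2) / 2 ≤ r ^ 2 / 2 := by norm_num; nlinarith
  linarith [hsplit, hmono]

/-- The induced distance from the event horizon:
`s(r) = r^(−(n−1)) ∫₁^r √(ξ^(n−2)/(ξ^(n−2)−1)) ξ^(n−1) dξ`. -/
noncomputable def schS (n : ℕ) (r : ℝ) : ℝ :=
  (∫ ξ in (1 : ℝ)..r, Real.sqrt (ξ ^ (n - 2) / (ξ ^ (n - 2) - 1)) * ξ ^ (n - 1)) / r ^ (n - 1)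

/-- `s(r) = (2/√(n−2)) √(r−1) + o(√(r−1))` as `r → 1⁺`,
and `s(r)/r → 1/n` as `r → ∞`. -/
theorem schS_asymptotics (n : ℕ) (hn : 3 ≤ n) :
    Filter.Tendsto
      (fun r : ℝ =>
        (schS n r - 2 / Real.sqrt ((n : ℝ) - 2) * Real.sqrt (r - 1)) / Real.sqrt (r - 1))
      (nhdsWithin 1 (Set.Ioi 1)) (nhds 0) ∧
    Filter.Tendsto (fun r : ℝ => schS n r / r) Filter.atTop (nhds (1 / (n : ℝ))) := by
  obtain ⟨k, rfl⟩ : ∃ k, n = k + 3 := ⟨n - 3, by omega⟩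
  have e2 : k + 3 - 2 = k + 1 := by omega
  have e1 : k + 3 - 1 = k + 2 := by omega
  have hs : ∀ r : ℝ, schS (k+3) r = (∫ ξ in (1:ℝ)..r, schIG k ξ) / r ^ (k+2) := by
    intro r
    simp only [schS, e1, e2]
    rfl
  have hcast : ((k+3 : ℕ) : ℝ) - 2 = (k:ℝ) + 1 := by push_cast; ring
  have hk1 : Real.sqrt ((k:ℝ)+1) ≠ 0 := by positivity
  have hbase : Tendsto (fun r : ℝ => r) (nhdsWithin 1 (Set.Ioi 1)) (nhds 1) :=
    tendsto_id.mono_left nhdsWithin_le_nhds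
  constructor
  · -- part 1
    simp only [hs, hcast]
    set c : ℝ := 2 / Real.sqrt ((k:ℝ)+1) with hc
    -- lower squeeze function
    have hgt : Tendsto (fun r : ℝ =>
        2 * (Real.sqrt (((k:ℝ)+1) * r ^ (k+1)))⁻¹ / r ^ (k+2) - c)
        (nhdsWithin 1 (Set.Ioi 1)) (nhds 0) := by
      have t2 : Tendsto (fun r : ℝ => ((k:ℝ)+1) * r ^ (k+1))
          (nhdsWithin 1 (Set.Ioi 1)) (nhds ((k:ℝ)+1)) := by
        have := (hbase.pow (k+1)).const_mul ((k:ℝ)+1)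
        simpa using this
      have t3 := (Real.continuous_sqrt.continuousAt.tendsto).comp t2
      have t4 := (t3.inv₀ hk1).const_mul (2:ℝ)
      have t6 : Tendsto (fun r : ℝ => r ^ (k+2)) (nhdsWithin 1 (Set.Ioi 1)) (nhds 1) := by
        simpa using hbase.pow (k+2)
      have t7 := (t4.div t6 one_ne_zero).sub (tendsto_const_nhds (x := c))
      have hv : 2 * (Real.sqrt ((k:ℝ)+1))⁻¹ / 1 - c = 0 := by
        rw [hc]; field_simp; ring
      rw [← hv]
      exact t7
    have hht : Tendsto (fun r : ℝ =>
        2 * Real.sqrt (r ^ (k+1) / ((k:ℝ)+1)) - c)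
        (nhdsWithin 1 (Set.Ioi 1)) (nhds 0) := by
      have t2 : Tendsto (fun r : ℝ => r ^ (k+1) / ((k:ℝ)+1))
          (nhdsWithin 1 (Set.Ioi 1)) (nhds (1 / ((k:ℝ)+1))) := by
        simpa using (hbase.pow (k+1)).div_const ((k:ℝ)+1)
      have t3 := ((Real.continuous_sqrt.continuousAt.tendsto).comp t2).const_mul (2:ℝ)
      have t7 := t3.sub (tendsto_const_nhds (x := c))
      have hv : 2 * Real.sqrt (1 / ((k:ℝ)+1)) - c = 0 := by
        rw [hc, one_div, Real.sqrt_inv]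
        field_simp
        ring
      rw [← hv]
      exact t7
    apply tendsto_of_tendsto_of_tendsto_of_le_of_le' hgt hht
    · filter_upwards [self_mem_nhdsWithin] with r hr
      have hr1 : (1:ℝ) < r := hr
      have hsp : (0:ℝ) < Real.sqrt (r - 1) := Real.sqrt_pos.2 (by linarith)
      have hrp : (0:ℝ) < r ^ (k+2) := by positivity
      have hI := integral_lb_one (k := k) hr1
      have key : (Real.sqrt (((k:ℝ)+1) * r ^ (k+1)))⁻¹ * (2 * Real.sqrt (r - 1)) / r ^ (k+2)
          ≤ (∫ ξ in (1:ℝ)..r, schIG k ξ) / r ^ (k+2) := (div_le_div_iff_of_pos_right hrp).2 hI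
      have e : ((Real.sqrt (((k:ℝ)+1) * r ^ (k+1)))⁻¹ * (2 * Real.sqrt (r - 1)) / r ^ (k+2)
          - c * Real.sqrt (r - 1)) / Real.sqrt (r - 1)
          = 2 * (Real.sqrt (((k:ℝ)+1) * r ^ (k+1)))⁻¹ / r ^ (k+2) - c := by
        field_simp
      rw [← e]
      exact (div_le_div_iff_of_pos_right hsp).2 (by linarith)
    · filter_upwards [self_mem_nhdsWithin] with r hr
      have hr1 : (1:ℝ) < r := hr
      have hsp : (0:ℝ) < Real.sqrt (r - 1) := Real.sqrt_pos.2 (by linarith)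
      have hrp : (0:ℝ) < r ^ (k+2) := by positivity
      have hI := integral_ub_one (k := k) hr1
      have key : (∫ ξ in (1:ℝ)..r, schIG k ξ) / r ^ (k+2)
          ≤ Real.sqrt (r ^ (k+1) / ((k:ℝ)+1)) * r ^ (k+2) * (2 * Real.sqrt (r - 1)) / r ^ (k+2) :=
        (div_le_div_iff_of_pos_right hrp).2 hI
      have e : (Real.sqrt (r ^ (k+1) / ((k:ℝ)+1)) * r ^ (k+2) * (2 * Real.sqrt (r - 1)) / r ^ (k+2)
          - c * Real.sqrt (r - 1)) / Real.sqrt (r - 1)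
          = 2 * Real.sqrt (r ^ (k+1) / ((k:ℝ)+1)) - c := by
        field_simp
      rw [← e]
      exact (div_le_div_iff_of_pos_right hsp).2 (by linarith)
  · -- part 2
    have hk3 : (0:ℝ) < (k:ℝ) + 3 := by positivity
    have hlim : (1:ℝ) / ((k+3 : ℕ) : ℝ) = ((k:ℝ)+3)⁻¹ := by push_cast; rw [one_div]
    rw [hlim]
    have ti3 : Tendsto (fun r : ℝ => (r ^ (k+3))⁻¹) atTop (nhds 0) := by
      have h := tendsto_pow_atTop (α := ℝ) (n := k+3) (by omega)
      exact h.inv_tendsto_atTop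
    have ti1 : Tendsto (fun r : ℝ => (r ^ (k+1))⁻¹) atTop (nhds 0) := by
      have h := tendsto_pow_atTop (α := ℝ) (n := k+1) (by omega)
      exact h.inv_tendsto_atTop
    set I2 : ℝ := ∫ ξ in (1:ℝ)..(2:ℝ), schIG k ξ with hI2
    have tL : Tendsto (fun r : ℝ => ((k:ℝ)+3)⁻¹ - ((k:ℝ)+3)⁻¹ * (r ^ (k+3))⁻¹)
        atTop (nhds (((k:ℝ)+3)⁻¹)) := by
      have := (tendsto_const_nhds (x := ((k:ℝ)+3)⁻¹) (f := atTop (α := ℝ))).sub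
        (ti3.const_mul (((k:ℝ)+3)⁻¹))
      simpa using this
    have tU : Tendsto (fun r : ℝ => I2 * (r ^ (k+3))⁻¹ + ((k:ℝ)+3)⁻¹ + (2:ℝ)⁻¹ * (r ^ (k+1))⁻¹)
        atTop (nhds (((k:ℝ)+3)⁻¹)) := by
      have := ((ti3.const_mul I2).add
        (tendsto_const_nhds (x := ((k:ℝ)+3)⁻¹) (f := atTop (α := ℝ)))).add
        (ti1.const_mul ((2:ℝ)⁻¹))
      simpa using this
    apply tendsto_of_tendsto_of_tendsto_of_le_of_le' tL tU
    · filter_upwards [eventually_ge_atTop (2:ℝ)] with r hr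
      have hr0 : (0:ℝ) < r := by linarith
      have hrp : (0:ℝ) < r ^ (k+3) := by positivity
      have hI := integral_lb_two (k := k) (r := r) (by linarith)
      have e : schS (k+3) r / r = (∫ ξ in (1:ℝ)..r, schIG k ξ) / r ^ (k+3) := by
        rw [hs, div_div, ← pow_succ]
      rw [e]
      have key : (r ^ (k+3) - 1) / ((k:ℝ)+3) / r ^ (k+3)
          ≤ (∫ ξ in (1:ℝ)..r, schIG k ξ) / r ^ (k+3) := (div_le_div_iff_of_pos_right hrp).2 hI
      have e2 : (r ^ (k+3) - 1) / ((k:ℝ)+3) / r ^ (k+3)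
          = ((k:ℝ)+3)⁻¹ - ((k:ℝ)+3)⁻¹ * (r ^ (k+3))⁻¹ := by
        field_simp
        try ring
      linarith [e2 ▸ key]
    · filter_upwards [eventually_ge_atTop (2:ℝ)] with r hr
      have hr0 : (0:ℝ) < r := by linarith
      have hrp : (0:ℝ) < r ^ (k+3) := by positivity
      have hI := integral_ub_two (k := k) (r := r) hr
      have e : schS (k+3) r / r = (∫ ξ in (1:ℝ)..r, schIG k ξ) / r ^ (k+3) := by
        rw [hs, div_div, ← pow_succ]
      rw [e]
      have key : (∫ ξ in (1:ℝ)..r, schIG k ξ) / r ^ (k+3)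
          ≤ (I2 + r ^ (k+3) / ((k:ℝ)+3) + r ^ 2 / 2) / r ^ (k+3) := (div_le_div_iff_of_pos_right hrp).2 hI
      have e2 : (I2 + r ^ (k+3) / ((k:ℝ)+3) + r ^ 2 / 2) / r ^ (k+3)
          = I2 * (r ^ (k+3))⁻¹ + ((k:ℝ)+3)⁻¹ + (2:ℝ)⁻¹ * (r ^ (k+1))⁻¹ := by
        rw [show k+3 = (k+1)+2 from by omega]
        field_simp
        ring
      linarith [e2 ▸ key]
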